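/- Let μ and ν be probability measures on ℝ and let W_∞(μ, ν) ≤ W, where W_∞ is the ∞-Wasserstein distance. Let Z be a Laplace random variable with scale W/ε independent of everything else. Then for any measurable set T and any x: if Y_μ ~ μ and Y_ν ~ ν, we have P(Y_μ + Z ∈ T) ≤ e^ε P(Y_ν + Z ∈ T). -/

import Mathlib

open MeasureTheory ProbabilityTheory

/-- The Laplace measure on `ℝ` with scale `b`, with density `(1/2b) exp(-|z|/b)`. -/
noncomputable def laplaceMeasure (b : ℝ) : Measure ℝ :=
  volume.withDensity (fun z => ENNReal.ofReal ((1 / (2 * b)) * Real.exp (-|z| / b)))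

/-- `γ` is a coupling of `μ` and `ν` witnessing `W_∞(μ, ν) ≤ W`. -/
def IsWinftyCouplingLe (μ ν : Measure ℝ) (W : ℝ) : Prop :=
  ∃ γ : Measure (ℝ × ℝ), IsProbabilityMeasure γ ∧
    γ.map Prod.fst = μ ∧ γ.map Prod.snd = ν ∧ ∀ᵐ p ∂γ, |p.1 - p.2| ≤ W

/-- Wasserstein Mechanism core inequality: if `W_∞(μ, ν) ≤ W` and `Z` is
Laplace noise with scale `W/ε` independent of the data, then for every measurable `T`,
`P(Y_μ + Z ∈ T) ≤ e^ε P(Y_ν + Z ∈ T)`, i.e. the convolutions with the Laplace measure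
have max-divergence at most `ε`. -/
theorem wasserstein_mechanism_privacy
    (μ ν : Measure ℝ) [IsProbabilityMeasure μ] [IsProbabilityMeasure ν]
    (W ε : ℝ) (hW : 0 < W) (hε : 0 < ε)
    (hWinfty : IsWinftyCouplingLe μ ν W) :
    ∀ T : Set ℝ, MeasurableSet T →
      (Measure.conv μ (laplaceMeasure (W / ε))) T ≤
        ENNReal.ofReal (Real.exp ε) * (Measure.conv ν (laplaceMeasure (W / ε))) T := by
  intro T hT
  obtain ⟨γ, hγprob, hfst, hsnd, hae⟩ := hWinfty
  set b : ℝ := W / ε with hb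
  have hbpos : 0 < b := div_pos hW hε
  set f : ℝ → ENNReal := fun z => ENNReal.ofReal ((1 / (2 * b)) * Real.exp (-|z| / b)) with hf
  have hfm : Measurable f := by
    apply ENNReal.measurable_ofReal.comp
    exact (measurable_const.mul ((measurable_abs.neg.div_const b).exp))
  -- pointwise density bound
  have key : ∀ c w : ℝ, |c| ≤ W →
      f (w + c) ≤ ENNReal.ofReal (Real.exp ε) * f w := by
    intro c w hc
    rw [hf, ← ENNReal.ofReal_mul (Real.exp_nonneg ε)]
    apply ENNReal.ofReal_le_ofReal
    rw [mul_comm (Real.exp ε), mul_assoc]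
    apply mul_le_mul_of_nonneg_left _ (by positivity)
    rw [← Real.exp_add]
    apply Real.exp_le_exp.2
    have h1 : |w| ≤ |w + c| + W := by
      calc |w| ≤ |w + c| + |c| := by
            have := abs_add_le (w + c) (-c); simpa using this
        _ ≤ |w + c| + W := by linarith
    have hWb : ε * b = W := by rw [hb]; field_simp [ne_of_gt hε]
    rw [div_le_iff₀ hbpos, add_mul, div_mul_cancel₀ _ (ne_of_gt hbpos)]
    linarith
  -- core set inequality
  have core : ∀ x y : ℝ, |x - y| ≤ W →
      laplaceMeasure b {z | x + z ∈ T} ≤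
        ENNReal.ofReal (Real.exp ε) * laplaceMeasure b {z | y + z ∈ T} := by
    intro x y hxy
    have hA : MeasurableSet {z : ℝ | x + z ∈ T} := (measurable_const_add x) hT
    have hB : MeasurableSet {z : ℝ | y + z ∈ T} := (measurable_const_add y) hT
    rw [laplaceMeasure, withDensity_apply _ hA, withDensity_apply _ hB,
      ← lintegral_indicator hA, ← lintegral_indicator hB]
    have shift : ∫⁻ z, Set.indicator {z : ℝ | x + z ∈ T} f z =
        ∫⁻ w, Set.indicator {z : ℝ | x + z ∈ T} f (w + (y - x)) := by
      exact (lintegral_add_right_eq_self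
        (fun z => Set.indicator {z : ℝ | x + z ∈ T} f z) (y - x)).symm
    rw [shift, ← lintegral_const_mul _ (hfm.indicator hB)]
    apply lintegral_mono
    intro w
    have hmem : (w + (y - x)) ∈ {z : ℝ | x + z ∈ T} ↔ w ∈ {z : ℝ | y + z ∈ T} := by
      have hkey : x + (w + (y - x)) = y + w := by ring
      simp only [Set.mem_setOf_eq, hkey]
    dsimp only
    by_cases hw : w ∈ {z : ℝ | y + z ∈ T}
    · rw [Set.indicator_of_mem (hmem.2 hw), Set.indicator_of_mem hw]
      have : |y - x| ≤ W := by rwa [abs_sub_comm]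
      exact key (y - x) w this
    · rw [Set.indicator_of_notMem (fun h => hw (hmem.1 h)),
        Set.indicator_of_notMem hw]
      simp
  -- express convolution via γ
  have hLsf : SFinite (laplaceMeasure b) := by
    unfold laplaceMeasure; infer_instance
  have conv_eq : ∀ (ρ : Measure ℝ), IsProbabilityMeasure ρ →
      (Measure.conv ρ (laplaceMeasure b)) T =
        ∫⁻ x, laplaceMeasure b {z | x + z ∈ T} ∂ρ := by
    intro ρ hρ
    rw [Measure.conv, Measure.map_apply measurable_add hT,
      Measure.prod_apply (measurable_add hT)]
    rfl
  rw [conv_eq μ inferInstance, conv_eq ν inferInstance]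
  have hgm : Measurable (fun x : ℝ => laplaceMeasure b {z | x + z ∈ T}) := by
    have : (fun x : ℝ => laplaceMeasure b {z | x + z ∈ T}) =
        fun x : ℝ => laplaceMeasure b (Prod.mk x ⁻¹' {p : ℝ × ℝ | p.1 + p.2 ∈ T}) := rfl
    rw [this]
    exact measurable_measure_prodMk_left (measurable_add hT)
  rw [← hfst, ← hsnd,
    lintegral_map hgm measurable_fst, lintegral_map hgm measurable_snd]
  refine le_trans (lintegral_mono_ae ?_)
    (le_of_eq (lintegral_const_mul _ (hgm.comp measurable_snd)))
  filter_upwards [hae] with p hp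
  exact core p.1 p.2 hp
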